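/- Comparison lemma for matrix differential inequalities: Let φ, ψ : [0,1] → S^d (symmetric d×d matrices) be differentiable on (0,1), with φ'(t) ⪯ F(t, φ(t)), φ(0) ⪯ u, ψ'(t) ⪰ G(t, ψ(t)), ψ(0) ⪰ v, where u ⪯ v and F, G : [0,1]×S^d → S^d satisfy F(t, x) ⪯ G(t, y) whenever x ⪯ y, and G is Lipschitz in its second argument with integrable rate L(t): ‖G(t,x) − G(t,y)‖ ≤ L(t)‖x − y‖. Then φ(t) − u ⪯ ψ(t) − v for all t ∈ [0,1]. -/

import Mathlib

open Matrix

/-- Spectral norm: largest singular value. -/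
noncomputable def matSpectralNorm {m n : Type*} [Fintype m] [Fintype n] [DecidableEq n]
    (M : Matrix m n ℝ) : ℝ :=
  ⨆ i, Real.sqrt ((show (Mᵀ * M).IsHermitian by
    simpa using Matrix.isHermitian_conjTranspose_mul_self M).eigenvalues i)

lemma isHermitian_transpose_mul_self' {m n : Type*} [Fintype m] (M : Matrix m n ℝ) :
    (Mᵀ * M).IsHermitian := by
  simpa using Matrix.isHermitian_conjTranspose_mul_self M

lemma isSymm_isHermitian {d : ℕ} {A : Matrix (Fin d) (Fin d) ℝ} (h : A.IsSymm) :
    A.IsHermitian := by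
  ext i j
  rw [Matrix.conjTranspose_apply, star_trivial, h.apply j i]

lemma dot_mulVec_comm {d : ℕ} (U : Matrix (Fin d) (Fin d) ℝ) (x a : Fin d → ℝ) :
    x ⬝ᵥ (U *ᵥ a) = ((star U : Matrix (Fin d) (Fin d) ℝ) *ᵥ x) ⬝ᵥ a := by
  rw [Matrix.dotProduct_mulVec, Matrix.star_eq_conjTranspose,
    Matrix.conjTranspose_eq_transpose_of_trivial, Matrix.mulVec_transpose]

lemma quadform_le_of_eigenvalues_le {d : ℕ} {H : Matrix (Fin d) (Fin d) ℝ}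
    (hH : H.IsHermitian) {c : ℝ} (hc : ∀ i, hH.eigenvalues i ≤ c) (x : Fin d → ℝ) :
    x ⬝ᵥ H *ᵥ x ≤ c * (x ⬝ᵥ x) := by
  set U : Matrix (Fin d) (Fin d) ℝ := (hH.eigenvectorUnitary : Matrix (Fin d) (Fin d) ℝ)
  have hUU : U * (star U : Matrix (Fin d) (Fin d) ℝ) = 1 :=
    (Matrix.mem_unitaryGroup_iff).mp (hH.eigenvectorUnitary).2
  set y : Fin d → ℝ := (star U : Matrix (Fin d) (Fin d) ℝ) *ᵥ x with hy
  have hyy : y ⬝ᵥ y = x ⬝ᵥ x := by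
    have := dot_mulVec_comm U x y
    rw [hy] at this ⊢
    rw [← this, Matrix.mulVec_mulVec, hUU, Matrix.one_mulVec]
  have hspec := hH.spectral_theorem
  have hquad : x ⬝ᵥ H *ᵥ x = ∑ i, hH.eigenvalues i * (y i * y i) := by
    calc x ⬝ᵥ H *ᵥ x
        = x ⬝ᵥ (U *ᵥ ((Matrix.diagonal (RCLike.ofReal ∘ hH.eigenvalues)) *ᵥ y)) := by
          rw [hy, Matrix.mulVec_mulVec, Matrix.mulVec_mulVec]; exact congrArg (fun A => x ⬝ᵥ A *ᵥ x) hspec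
      _ = y ⬝ᵥ ((Matrix.diagonal (RCLike.ofReal ∘ hH.eigenvalues)) *ᵥ y) := by
          rw [dot_mulVec_comm]
      _ = ∑ i, hH.eigenvalues i * (y i * y i) := by
          simp [dotProduct, Matrix.mulVec_diagonal]
          exact Finset.sum_congr rfl fun i _ => by ring
  rw [hquad, ← hyy]
  have : ∀ i ∈ Finset.univ, hH.eigenvalues i * (y i * y i) ≤ c * (y i * y i) := by
    intro i _
    exact mul_le_mul_of_nonneg_right (hc i) (mul_self_nonneg _)
  calc (∑ i, hH.eigenvalues i * (y i * y i)) ≤ ∑ i, c * (y i * y i) :=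
        Finset.sum_le_sum this
    _ = c * (y ⬝ᵥ y) := by rw [dotProduct, Finset.mul_sum]

lemma matSpectralNorm_nonneg {d : ℕ} (N : Matrix (Fin d) (Fin d) ℝ) : 0 ≤ matSpectralNorm N := by
  unfold matSpectralNorm
  exact Real.iSup_nonneg fun i => Real.sqrt_nonneg _

lemma abs_quadform_le_spectralNorm {d : ℕ} (N : Matrix (Fin d) (Fin d) ℝ) (x : Fin d → ℝ) :
    |x ⬝ᵥ N *ᵥ x| ≤ matSpectralNorm N * (x ⬝ᵥ x) := by
  set w : Fin d → ℝ := N *ᵥ x with hw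
  set S := matSpectralNorm N with hS
  have hS0 : 0 ≤ S := matSpectralNorm_nonneg N
  have hxx : 0 ≤ x ⬝ᵥ x := Finset.sum_nonneg fun i _ => mul_self_nonneg _
  have hcs : (x ⬝ᵥ w) ^ 2 ≤ (x ⬝ᵥ x) * (w ⬝ᵥ w) := by
    have := Finset.sum_mul_sq_le_sq_mul_sq Finset.univ x w
    simpa [dotProduct, pow_two, Finset.mul_sum] using this
  have hww : w ⬝ᵥ w ≤ S ^ 2 * (x ⬝ᵥ x) := by
    have h1 : w ⬝ᵥ w = x ⬝ᵥ (Nᴴ * N) *ᵥ x := by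
      rw [← Matrix.mulVec_mulVec, Matrix.dotProduct_mulVec x,
        Matrix.conjTranspose_eq_transpose_of_trivial, Matrix.vecMul_transpose, hw]
    have h2 := quadform_le_of_eigenvalues_le (isHermitian_transpose_mul_self' N)
      (c := S ^ 2) (fun i => ?_) x
    · rw [h1]; exact h2
    · have hnn : 0 ≤ (isHermitian_transpose_mul_self' N).eigenvalues i :=
        (Matrix.posSemidef_conjTranspose_mul_self N).eigenvalues_nonneg i
      have hle : Real.sqrt ((isHermitian_transpose_mul_self' N).eigenvalues i) ≤ S := by
        rw [hS]; unfold matSpectralNorm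
        exact le_ciSup (f := fun j => Real.sqrt ((isHermitian_transpose_mul_self' N).eigenvalues j)) (Set.Finite.bddAbove (Set.finite_range _)) i
      calc (isHermitian_transpose_mul_self' N).eigenvalues i
          = Real.sqrt ((isHermitian_transpose_mul_self' N).eigenvalues i) ^ 2 :=
            (Real.sq_sqrt hnn).symm
        _ ≤ S ^ 2 := by
            apply pow_le_pow_left₀ (Real.sqrt_nonneg _) hle
  have habs : |x ⬝ᵥ w| = Real.sqrt ((x ⬝ᵥ w) ^ 2) := (Real.sqrt_sq_eq_abs _).symm
  rw [habs]
  calc Real.sqrt ((x ⬝ᵥ w) ^ 2) ≤ Real.sqrt ((x ⬝ᵥ x) * (S ^ 2 * (x ⬝ᵥ x))) := by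
        apply Real.sqrt_le_sqrt
        calc (x ⬝ᵥ w) ^ 2 ≤ (x ⬝ᵥ x) * (w ⬝ᵥ w) := hcs
          _ ≤ (x ⬝ᵥ x) * (S ^ 2 * (x ⬝ᵥ x)) := mul_le_mul_of_nonneg_left hww hxx
    _ = S * (x ⬝ᵥ x) := by
        rw [show (x ⬝ᵥ x) * (S ^ 2 * (x ⬝ᵥ x)) = (S * (x ⬝ᵥ x)) ^ 2 by ring]
        exact Real.sqrt_sq (mul_nonneg hS0 hxx)

lemma eigenvalues_smul_one {d : ℕ} (c : ℝ)
    (h : (c • (1 : Matrix (Fin d) (Fin d) ℝ)).IsHermitian) (i : Fin d) :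
    h.eigenvalues i = c := by
  have hv := h.mulVec_eigenvectorBasis i
  have h1 : (c • (1 : Matrix (Fin d) (Fin d) ℝ)) *ᵥ ⇑(h.eigenvectorBasis i)
      = c • ⇑(h.eigenvectorBasis i) := by
    rw [Matrix.smul_mulVec, Matrix.one_mulVec]
  rw [h1] at hv
  have hvne : ⇑(h.eigenvectorBasis i) ≠ 0 := by
    intro h0
    have := h.eigenvectorBasis.orthonormal.1 i
    rw [show (h.eigenvectorBasis i) = (0 : EuclideanSpace ℝ (Fin d)) from by
      apply PiLp.ext; intro j; exact congrFun h0 j] at this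
    simp at this
  by_contra hne
  have : (c - h.eigenvalues i) • ⇑(h.eigenvectorBasis i) = 0 := by
    rw [sub_smul, hv, sub_self]
  rcases smul_eq_zero.mp this with h' | h'
  · exact hne (sub_eq_zero.mp h').symm
  · exact hvne h'

lemma eigenvalues_congr' {d : ℕ} {A B : Matrix (Fin d) (Fin d) ℝ} (h : A = B)
    (hA : A.IsHermitian) (hB : B.IsHermitian) : hA.eigenvalues = hB.eigenvalues := by
  subst h; rfl

lemma spectralNorm_smul_one_le {d : ℕ} {c : ℝ} (hc : 0 ≤ c) :
    matSpectralNorm ((-c) • (1 : Matrix (Fin d) (Fin d) ℝ)) ≤ c := by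
  unfold matSpectralNorm
  apply Real.iSup_le _ hc
  intro i
  have heq : ((-c) • (1 : Matrix (Fin d) (Fin d) ℝ))ᵀ * ((-c) • 1) = (c * c) • 1 := by
    rw [Matrix.transpose_smul, Matrix.transpose_one]
    simp [smul_smul]
  have hB : ((c * c) • (1 : Matrix (Fin d) (Fin d) ℝ)).IsHermitian :=
    heq ▸ isHermitian_transpose_mul_self' _
  rw [congrFun (eigenvalues_congr' heq (isHermitian_transpose_mul_self' _) hB) i,
    eigenvalues_smul_one (d := d) (c * c) hB i, Real.sqrt_mul_self hc]

lemma dotProduct_self_nonneg' {d : ℕ} (y : Fin d → ℝ) : 0 ≤ y ⬝ᵥ y :=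
  Finset.sum_nonneg fun i _ => mul_self_nonneg _

lemma quadform_lower_of_unit {d : ℕ} (A : Matrix (Fin d) (Fin d) ℝ) (M : ℝ) (hM : 0 ≤ M)
    (h : ∀ x : Fin d → ℝ, x ⬝ᵥ x = 1 → -M ≤ x ⬝ᵥ A *ᵥ x) :
    ∀ y : Fin d → ℝ, -(M * (y ⬝ᵥ y)) ≤ y ⬝ᵥ A *ᵥ y := by
  intro y
  by_cases hy : y ⬝ᵥ y = 0
  · have hy0 : y = 0 := dotProduct_self_eq_zero.mp hy
    subst hy0
    simp
  · have hpos : 0 < y ⬝ᵥ y := lt_of_le_of_ne (dotProduct_self_nonneg' y) (Ne.symm hy)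
    set c : ℝ := Real.sqrt (y ⬝ᵥ y) with hc
    have hc0 : 0 < c := Real.sqrt_pos.mpr hpos
    have hc2 : c * c = y ⬝ᵥ y := Real.mul_self_sqrt hpos.le
    set x : Fin d → ℝ := c⁻¹ • y with hx
    have hxx : x ⬝ᵥ x = 1 := by
      rw [hx, smul_dotProduct, dotProduct_smul, smul_eq_mul, smul_eq_mul, ← hc2]
      field_simp
    have hAx : x ⬝ᵥ A *ᵥ x = c⁻¹ * (c⁻¹ * (y ⬝ᵥ A *ᵥ y)) := by
      rw [hx, smul_dotProduct, Matrix.mulVec_smul, dotProduct_smul,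
        smul_eq_mul, smul_eq_mul]
    have := h x hxx
    rw [hAx] at this
    have hcc : (0:ℝ) < c * c := by positivity
    have h2 : c * c * -M ≤ c * c * (c⁻¹ * (c⁻¹ * (y ⬝ᵥ A *ᵥ y))) :=
      mul_le_mul_of_nonneg_left this hcc.le
    calc -(M * (y ⬝ᵥ y)) = c * c * -M := by rw [← hc2]; ring
      _ ≤ c * c * (c⁻¹ * (c⁻¹ * (y ⬝ᵥ A *ᵥ y))) := h2
      _ = y ⬝ᵥ A *ᵥ y := by field_simp

open MeasureTheory in
lemma key_interval {d : ℕ} (hd : 0 < d)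
    (W W' : ℝ → Matrix (Fin d) (Fin d) ℝ) (Lp : ℝ → ℝ)
    (hWcont : ∀ i j, ContinuousOn (fun t => W t i j) (Set.Icc (0:ℝ) 1))
    (hWherm : ∀ t ∈ Set.Icc (0:ℝ) 1, (W t).IsHermitian)
    (hWderiv : ∀ t ∈ Set.Ioo (0:ℝ) 1, ∀ i j, HasDerivAt (fun s => W s i j) (W' t i j) t)
    (hLp0 : ∀ t, 0 ≤ Lp t)
    (hLpint : IntervalIntegrable Lp volume 0 1)
    (hkey : ∀ t ∈ Set.Ioo (0:ℝ) 1, ∀ M : ℝ, 0 ≤ M →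
       (∀ y : Fin d → ℝ, -(M * (y ⬝ᵥ y)) ≤ y ⬝ᵥ W t *ᵥ y) →
       ∀ x : Fin d → ℝ, x ⬝ᵥ x = 1 → -(Lp t * M) ≤ x ⬝ᵥ W' t *ᵥ x)
    (a b : ℝ) (ha : 0 ≤ a) (hb : b ≤ 1) (hab : a ≤ b)
    (hint : (∫ s in a..b, Lp s) ≤ 1/2)
    (hWa : (W a).PosSemidef) :
    ∀ t ∈ Set.Icc a b, (W t).PosSemidef := by
  have hsubI : Set.Icc a b ⊆ Set.Icc (0:ℝ) 1 := Set.Icc_subset_Icc ha hb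
  -- the unit sphere for the dot product
  set S : Set (Fin d → ℝ) := {x | x ⬝ᵥ x = 1} with hSdef
  have hqcont : Continuous fun x : Fin d → ℝ => x ⬝ᵥ x := by
    simp only [dotProduct]
    exact continuous_finset_sum _ fun i _ => (continuous_apply i).mul (continuous_apply i)
  have hSclosed : IsClosed S := by
    have : S = (fun x : Fin d → ℝ => x ⬝ᵥ x) ⁻¹' {1} := by
      ext x; simp [hSdef]
    rw [this]
    exact IsClosed.preimage hqcont isClosed_singleton
  have hScompact : IsCompact S := by
    apply (isCompact_closedBall (0 : Fin d → ℝ) 1).of_isClosed_subset hSclosed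
    intro x hx
    rw [mem_closedBall_zero_iff]
    apply pi_norm_le_iff_of_nonneg zero_le_one |>.mpr
    intro i
    rw [Real.norm_eq_abs, abs_le]
    have hle : x i * x i ≤ 1 := by
      rw [← hx]
      have : ∀ j ∈ Finset.univ, 0 ≤ x j * x j := fun j _ => mul_self_nonneg _
      exact Finset.single_le_sum this (Finset.mem_univ i)
    constructor <;> nlinarith
  have hSne : S.Nonempty := by
    refine ⟨fun j => if j = ⟨0, hd⟩ then 1 else 0, ?_⟩
    simp only [hSdef, Set.mem_setOf_eq, dotProduct]
    rw [Finset.sum_eq_single ⟨0, hd⟩]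
    · simp
    · intro j _ hj; simp [hj]
    · intro h; exact absurd (Finset.mem_univ _) h
  set K : Set (ℝ × (Fin d → ℝ)) := Set.Icc a b ×ˢ S with hKdef
  have hKcompact : IsCompact K := isCompact_Icc.prod hScompact
  have hKne : K.Nonempty := ⟨(a, hSne.choose), ⟨Set.left_mem_Icc.mpr hab, hSne.choose_spec⟩⟩
  set f : ℝ × (Fin d → ℝ) → ℝ := fun p => p.2 ⬝ᵥ W p.1 *ᵥ p.2 with hfdef
  have hfcont : ContinuousOn f K := by
    have hf' : f = fun p => ∑ i, p.2 i * ∑ j, W p.1 i j * p.2 j := by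
      funext p
      simp [hfdef, dotProduct, Matrix.mulVec]
    rw [hf']
    apply continuousOn_finset_sum
    intro i _
    apply ContinuousOn.mul
    · exact ((continuous_apply i).comp continuous_snd).continuousOn
    · apply continuousOn_finset_sum
      intro j _
      apply ContinuousOn.mul
      · apply (hWcont i j).comp continuous_fst.continuousOn
        intro p hp
        exact hsubI hp.1
      · exact ((continuous_apply j).comp continuous_snd).continuousOn
  obtain ⟨p₀, hp₀K, hmin⟩ := hKcompact.exists_isMinOn hKne hfcont
  set t₀ := p₀.1 with ht₀
  set x₀ := p₀.2 with hx₀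
  have ht₀mem : t₀ ∈ Set.Icc a b := hp₀K.1
  have hx₀S : x₀ ⬝ᵥ x₀ = 1 := hp₀K.2
  by_cases hM : 0 ≤ f p₀
  · -- minimum nonneg: all quadforms nonneg
    intro t ht
    refine Matrix.PosSemidef.of_dotProduct_mulVec_nonneg (hWherm t (hsubI ht)) ?_
    intro y
    have hunit : ∀ x : Fin d → ℝ, x ⬝ᵥ x = 1 → -(0:ℝ) ≤ x ⬝ᵥ W t *ᵥ x := by
      intro x hx
      rw [neg_zero]
      exact hM.trans (hmin (Set.mk_mem_prod ht hx))
    have := quadform_lower_of_unit (W t) 0 le_rfl hunit y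
    simpa using this
  · exfalso
    push_neg at hM
    set M : ℝ := -(f p₀) with hMdef
    have hMpos : 0 < M := by simp [hMdef]; linarith
    -- uniform lower bound on quadratic forms
    have hlow : ∀ s ∈ Set.Icc a b, ∀ y : Fin d → ℝ,
        -(M * (y ⬝ᵥ y)) ≤ y ⬝ᵥ W s *ᵥ y := by
      intro s hs
      apply quadform_lower_of_unit _ _ hMpos.le
      intro x hx
      have := hmin (Set.mk_mem_prod hs hx : (s, x) ∈ K)
      simpa [hMdef] using this
    -- the scalar function along x₀
    set g : ℝ → ℝ := fun s => x₀ ⬝ᵥ W s *ᵥ x₀ with hgdef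
    have hga : 0 ≤ g a := by
      have := hWa.dotProduct_mulVec_nonneg x₀
      simpa using this
    have hgt₀ : g t₀ = -M := by simp [hgdef, hMdef, hfdef, ht₀, hx₀]
    have hat₀ : a < t₀ := by
      rcases lt_or_eq_of_le ht₀mem.1 with h | h
      · exact h
      · exfalso; rw [← h] at hgt₀; linarith [hga, hgt₀, hMpos]
    have ht₀le : t₀ ≤ b := ht₀mem.2
    have hIoo : Set.Ioo a t₀ ⊆ Set.Ioo (0:ℝ) 1 :=
      fun s hs => ⟨lt_of_le_of_lt ha hs.1, lt_of_lt_of_le hs.2 (ht₀le.trans hb)⟩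
    have hgcont : ContinuousOn g (Set.Icc a t₀) := by
      have hgeq : g = fun s => ∑ i, x₀ i * ∑ j, W s i j * x₀ j := by
        funext s; simp [hgdef, dotProduct, Matrix.mulVec]
      rw [hgeq]
      apply continuousOn_finset_sum; intro i _
      apply ContinuousOn.mul continuousOn_const
      apply continuousOn_finset_sum; intro j _
      exact ContinuousOn.mul
        ((hWcont i j).mono (Set.Icc_subset_Icc ha (ht₀le.trans hb))) continuousOn_const
    have hgderiv : ∀ s ∈ Set.Ioo a t₀,
        HasDerivWithinAt g (x₀ ⬝ᵥ W' s *ᵥ x₀) (Set.Ioi s) s := by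
      intro s hs
      have hs' : s ∈ Set.Ioo (0:ℝ) 1 := hIoo hs
      have h1 : HasDerivAt (fun r => ∑ i, x₀ i * ∑ j, W r i j * x₀ j)
          (∑ i, x₀ i * ∑ j, W' s i j * x₀ j) s := by
        apply HasDerivAt.fun_sum
        intro i _
        apply HasDerivAt.const_mul
        apply HasDerivAt.fun_sum
        intro j _
        exact (hWderiv s hs' i j).mul_const (x₀ j)
      have hgeq : g = fun r => ∑ i, x₀ i * ∑ j, W r i j * x₀ j := by
        funext r; simp [hgdef, dotProduct, Matrix.mulVec]
      have hgeq2 : x₀ ⬝ᵥ W' s *ᵥ x₀ = ∑ i, x₀ i * ∑ j, W' s i j * x₀ j := by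
        simp [dotProduct, Matrix.mulVec]
      rw [hgeq, hgeq2]
      exact h1.hasDerivWithinAt
    have hLpab : IntervalIntegrable Lp MeasureTheory.volume a t₀ := by
      apply hLpint.mono_set
      rw [Set.uIcc_of_le hat₀.le, Set.uIcc_of_le zero_le_one]
      exact Set.Icc_subset_Icc ha (ht₀le.trans hb)
    have hφint : MeasureTheory.IntegrableOn (fun s => -(Lp s * M))
        (Set.Icc a t₀) MeasureTheory.volume := by
      have h := (intervalIntegrable_iff_integrableOn_Icc_of_le hat₀.le).mp hLpab
      exact (h.mul_const M).neg
    have hle : ∀ s ∈ Set.Ioo a t₀, -(Lp s * M) ≤ x₀ ⬝ᵥ W' s *ᵥ x₀ := by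
      intro s hs
      exact hkey s (hIoo hs) M hMpos.le
        (hlow s ⟨hs.1.le, hs.2.le.trans ht₀le⟩) x₀ hx₀S
    have hftc := intervalIntegral.integral_le_sub_of_hasDeriv_right_of_le
      hat₀.le hgcont hgderiv hφint hle
    have h1 : (∫ s in a..t₀, -(Lp s * M)) = -((∫ s in a..t₀, Lp s) * M) := by
      rw [intervalIntegral.integral_neg, intervalIntegral.integral_mul_const]
    have hLpab' : IntervalIntegrable Lp MeasureTheory.volume a b := by
      apply hLpint.mono_set
      rw [Set.uIcc_of_le hab, Set.uIcc_of_le zero_le_one]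
      exact Set.Icc_subset_Icc ha hb
    have h2 : (∫ s in a..t₀, Lp s) ≤ ∫ s in a..b, Lp s := by
      apply intervalIntegral.integral_mono_interval le_rfl hat₀.le ht₀le
      · exact Filter.Eventually.of_forall fun s => hLp0 s
      · exact hLpab'
    have h3 : 0 ≤ ∫ s in a..t₀, Lp s :=
      intervalIntegral.integral_nonneg hat₀.le fun s _ => hLp0 s
    rw [h1, hgt₀] at hftc
    have hI12 : (∫ s in a..t₀, Lp s) ≤ 1/2 := h2.trans hint
    nlinarith [mul_le_mul_of_nonneg_right hI12 hMpos.le, hga, hftc, hMpos]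


/-- Comparison lemma for matrix differential inequalities. -/
theorem matrix_ode_comparison
    (d : ℕ) (φ ψ φ' ψ' : ℝ → Matrix (Fin d) (Fin d) ℝ)
    (F G : ℝ → Matrix (Fin d) (Fin d) ℝ → Matrix (Fin d) (Fin d) ℝ)
    (u v : Matrix (Fin d) (Fin d) ℝ) (L : ℝ → ℝ)
    (hφsymm : ∀ t ∈ Set.Icc (0 : ℝ) 1, (φ t).IsSymm)
    (hψsymm : ∀ t ∈ Set.Icc (0 : ℝ) 1, (ψ t).IsSymm)
    (husymm : u.IsSymm) (hvsymm : v.IsSymm)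
    (hφcont : ∀ i j, ContinuousOn (fun t => φ t i j) (Set.Icc (0 : ℝ) 1))
    (hψcont : ∀ i j, ContinuousOn (fun t => ψ t i j) (Set.Icc (0 : ℝ) 1))
    (hφderiv : ∀ t ∈ Set.Ioo (0 : ℝ) 1, ∀ i j, HasDerivAt (fun s => φ s i j) (φ' t i j) t)
    (hψderiv : ∀ t ∈ Set.Ioo (0 : ℝ) 1, ∀ i j, HasDerivAt (fun s => ψ s i j) (ψ' t i j) t)
    (hφineq : ∀ t ∈ Set.Ioo (0 : ℝ) 1, (F t (φ t) - φ' t).PosSemidef)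
    (hψineq : ∀ t ∈ Set.Ioo (0 : ℝ) 1, (ψ' t - G t (ψ t)).PosSemidef)
    (hφ0 : (u - φ 0).PosSemidef) (hψ0 : (ψ 0 - v).PosSemidef)
    (huv : (v - u).PosSemidef)
    (hFG : ∀ t ∈ Set.Icc (0 : ℝ) 1, ∀ x y : Matrix (Fin d) (Fin d) ℝ,
      (y - x).PosSemidef → (G t y - F t x).PosSemidef)
    (hLip : ∀ t ∈ Set.Icc (0 : ℝ) 1, ∀ x y : Matrix (Fin d) (Fin d) ℝ,
      matSpectralNorm (G t x - G t y) ≤ L t * matSpectralNorm (x - y))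
    (hLint : IntervalIntegrable L MeasureTheory.volume 0 1) :
    ∀ t ∈ Set.Icc (0 : ℝ) 1, ((ψ t - v) - (φ t - u)).PosSemidef := by
  rcases Nat.eq_zero_or_pos d with hd0 | hd
  · subst hd0
    intro t _
    apply Matrix.PosSemidef.of_dotProduct_mulVec_nonneg
    · ext i j; exact i.elim0
    · intro x; simp [dotProduct]
  set W : ℝ → Matrix (Fin d) (Fin d) ℝ := fun s => (ψ s - v) - (φ s - u) with hWdef
  set W' : ℝ → Matrix (Fin d) (Fin d) ℝ := fun s => ψ' s - φ' s with hW'def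
  set Lp : ℝ → ℝ := fun s => max (L s) 0 with hLpdef
  have hLp0 : ∀ s, 0 ≤ Lp s := fun s => le_max_right _ _
  have hLpint : IntervalIntegrable Lp MeasureTheory.volume 0 1 := by
    have heq : Lp = fun s => (L s + |L s|) / 2 := by
      funext s
      rcases le_total (L s) 0 with h | h
      · rw [hLpdef]; simp only []
        rw [max_eq_right h, abs_of_nonpos h]; ring
      · rw [hLpdef]; simp only []
        rw [max_eq_left h, abs_of_nonneg h]; ring
    rw [heq]
    exact (hLint.add hLint.abs).div_const 2
  have hWcont : ∀ i j, ContinuousOn (fun t => W t i j) (Set.Icc (0:ℝ) 1) := by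
    intro i j
    have : (fun t => W t i j) = fun t => (ψ t i j - v i j) - (φ t i j - u i j) := by
      funext t; simp [hWdef, Matrix.sub_apply]
    rw [this]
    exact ((hψcont i j).sub continuousOn_const).sub ((hφcont i j).sub continuousOn_const)
  have hWherm : ∀ t ∈ Set.Icc (0:ℝ) 1, (W t).IsHermitian := by
    intro t ht
    apply isSymm_isHermitian
    unfold Matrix.IsSymm
    rw [hWdef]
    simp only [Matrix.transpose_sub]
    rw [hψsymm t ht, hφsymm t ht, husymm, hvsymm]
  have hWderiv : ∀ t ∈ Set.Ioo (0:ℝ) 1, ∀ i j,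
      HasDerivAt (fun s => W s i j) (W' t i j) t := by
    intro t ht i j
    have h1 : (fun s => W s i j) = fun s => (ψ s i j - v i j) - (φ s i j - u i j) := by
      funext s; simp [hWdef, Matrix.sub_apply]
    have h2 : W' t i j = (ψ' t i j) - (φ' t i j) := by simp [hW'def, Matrix.sub_apply]
    rw [h1, h2]
    exact ((hψderiv t ht i j).sub_const _).sub ((hφderiv t ht i j).sub_const _)
  have hkey : ∀ t ∈ Set.Ioo (0:ℝ) 1, ∀ M : ℝ, 0 ≤ M →
      (∀ y : Fin d → ℝ, -(M * (y ⬝ᵥ y)) ≤ y ⬝ᵥ W t *ᵥ y) →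
      ∀ x : Fin d → ℝ, x ⬝ᵥ x = 1 → -(Lp t * M) ≤ x ⬝ᵥ W' t *ᵥ x := by
    intro t ht M hM hlow x hx
    have ht01 : t ∈ Set.Icc (0:ℝ) 1 := Set.Ioo_subset_Icc_self ht
    set A1 := ψ' t - G t (ψ t) with hA1
    set A2 := G t (ψ t) - G t (ψ t + M • (1 : Matrix (Fin d) (Fin d) ℝ)) with hA2
    set A3 := G t (ψ t + M • (1 : Matrix (Fin d) (Fin d) ℝ)) - F t (φ t) with hA3
    set A4 := F t (φ t) - φ' t with hA4
    have hsum : x ⬝ᵥ W' t *ᵥ x =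
        x ⬝ᵥ A1 *ᵥ x + x ⬝ᵥ A2 *ᵥ x + x ⬝ᵥ A3 *ᵥ x + x ⬝ᵥ A4 *ᵥ x := by
      have : W' t = A1 + A2 + A3 + A4 := by
        rw [hA1, hA2, hA3, hA4, hW'def]; abel
      rw [this]
      simp [Matrix.add_mulVec, dotProduct_add]
    have h1 : 0 ≤ x ⬝ᵥ A1 *ᵥ x := by
      have := (hψineq t ht).dotProduct_mulVec_nonneg x
      simpa using this
    have h4 : 0 ≤ x ⬝ᵥ A4 *ᵥ x := by
      have := (hφineq t ht).dotProduct_mulVec_nonneg x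
      simpa using this
    have h3 : 0 ≤ x ⬝ᵥ A3 *ᵥ x := by
      have hpsd : ((ψ t + M • (1 : Matrix (Fin d) (Fin d) ℝ)) - φ t).PosSemidef := by
        apply Matrix.PosSemidef.of_dotProduct_mulVec_nonneg
        · apply isSymm_isHermitian
          unfold Matrix.IsSymm
          simp only [Matrix.transpose_sub, Matrix.transpose_add, Matrix.transpose_smul,
            Matrix.transpose_one]
          rw [hψsymm t ht01, hφsymm t ht01]
        · intro y
          have hy1 : star y = y := by funext i; simp
          have hid : (ψ t + M • (1 : Matrix (Fin d) (Fin d) ℝ)) - φ t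
              = W t + (v - u) + M • (1 : Matrix (Fin d) (Fin d) ℝ) := by
            show _ = ((ψ t - v) - (φ t - u)) + (v - u) + M • (1 : Matrix (Fin d) (Fin d) ℝ); abel
          rw [hy1, hid]
          simp only [Matrix.add_mulVec, dotProduct_add]
          have e1 : y ⬝ᵥ (M • (1 : Matrix (Fin d) (Fin d) ℝ)) *ᵥ y = M * (y ⬝ᵥ y) := by
            rw [Matrix.smul_mulVec, Matrix.one_mulVec, dotProduct_smul,
              smul_eq_mul]
          have e2 := hlow y
          have e3 : 0 ≤ y ⬝ᵥ (v - u) *ᵥ y := by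
            have := huv.dotProduct_mulVec_nonneg y; simpa using this
          rw [e1]
          linarith
      have := (hFG t ht01 (φ t) (ψ t + M • (1 : Matrix (Fin d) (Fin d) ℝ)) hpsd).dotProduct_mulVec_nonneg x
      simpa [hA3] using this
    have h2 : -(Lp t * M) ≤ x ⬝ᵥ A2 *ᵥ x := by
      have habs := abs_quadform_le_spectralNorm A2 x
      rw [hx, mul_one] at habs
      have hdiff : ψ t - (ψ t + M • (1 : Matrix (Fin d) (Fin d) ℝ))
          = (-M) • (1 : Matrix (Fin d) (Fin d) ℝ) := by
        rw [neg_smul]; abel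
      have hsn : matSpectralNorm A2 ≤ L t * matSpectralNorm ((-M) • (1 : Matrix (Fin d) (Fin d) ℝ)) := by
        rw [← hdiff]
        exact hLip t ht01 (ψ t) (ψ t + M • (1 : Matrix (Fin d) (Fin d) ℝ))
      have hsn1 : matSpectralNorm ((-M) • (1 : Matrix (Fin d) (Fin d) ℝ)) ≤ M :=
        spectralNorm_smul_one_le hM
      have hsn0 : 0 ≤ matSpectralNorm ((-M) • (1 : Matrix (Fin d) (Fin d) ℝ)) :=
        matSpectralNorm_nonneg _
      have hLLp : L t ≤ Lp t := le_max_left _ _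
      have hchain : matSpectralNorm A2 ≤ Lp t * M :=
        hsn.trans ((mul_le_mul_of_nonneg_right hLLp hsn0).trans
          (mul_le_mul_of_nonneg_left hsn1 (hLp0 t)))
      have := neg_abs_le (x ⬝ᵥ A2 *ᵥ x)
      linarith
    linarith [hsum, h1, h2, h3, h4]
  -- partition [0,1] into pieces with small integral of Lp
  set Φ : ℝ → ℝ := fun r => ∫ s in (0:ℝ)..r, Lp s with hΦdef
  have hΦcont : ContinuousOn Φ (Set.Icc (0:ℝ) 1) := by
    have := intervalIntegral.continuousOn_primitive_interval' hLpint
      (Set.left_mem_uIcc (a := (0:ℝ)) (b := 1))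
    rwa [Set.uIcc_of_le zero_le_one] at this
  have huc : UniformContinuousOn Φ (Set.Icc (0:ℝ) 1) :=
    isCompact_Icc.uniformContinuousOn_of_continuous hΦcont
  rw [Metric.uniformContinuousOn_iff] at huc
  obtain ⟨δ, hδ0, hδ⟩ := huc (1/2) (by norm_num)
  obtain ⟨n, hn⟩ := exists_nat_one_div_lt hδ0
  set N : ℕ := n + 1 with hN
  have hN0 : (0:ℝ) < N := by positivity
  have hstep : ∀ k : ℕ, ∀ t ∈ Set.Icc (0:ℝ) (min ((k:ℝ)/N) 1), (W t).PosSemidef := by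
    intro k
    induction k with
    | zero =>
      intro t ht
      simp only [Nat.cast_zero, zero_div, min_eq_left zero_le_one] at ht
      have ht0 : t = 0 := le_antisymm ht.2 ht.1
      subst ht0
      have hid : W 0 = (ψ 0 - v) + (u - φ 0) := by rw [hWdef]; abel
      rw [hid]
      exact hψ0.add hφ0
    | succ k ih =>
      intro t ht
      rw [Nat.cast_succ] at ht
      set a : ℝ := min ((k:ℝ)/N) 1 with hadef
      set b : ℝ := min (((k:ℝ)+1)/N) 1 with hbdef
      have ha0 : 0 ≤ a := le_min (by positivity) zero_le_one
      have hb1 : b ≤ 1 := min_le_right _ _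
      have ha1 : a ≤ 1 := min_le_right _ _
      have hdivle : (k:ℝ)/N ≤ ((k:ℝ)+1)/N := by gcongr; linarith
      have hab : a ≤ b := min_le_min hdivle le_rfl
      have hba : b - a ≤ 1 / N := by
        have hdd : ((k:ℝ)+1)/N - (k:ℝ)/N = 1/N := by
          rw [div_sub_div_same]; norm_num
        rcases le_total (((k:ℝ)+1)/N) 1 with h | h
        · have hk1 : (k:ℝ)/N ≤ 1 := hdivle.trans h
          rw [hbdef, min_eq_left h, hadef, min_eq_left hk1]
          linarith
        · rw [hbdef, min_eq_right h]
          rcases le_total ((k:ℝ)/N) 1 with h2 | h2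
          · rw [hadef, min_eq_left h2]; linarith
          · rw [hadef, min_eq_right h2]
            have h3 : (0:ℝ) ≤ 1/N := by positivity
            linarith
      have hmemb : b ∈ Set.Icc (0:ℝ) 1 := ⟨ha0.trans hab, hb1⟩
      have hmema : a ∈ Set.Icc (0:ℝ) 1 := ⟨ha0, ha1⟩
      have hdistab : dist b a < δ := by
        rw [Real.dist_eq, abs_of_nonneg (by linarith : (0:ℝ) ≤ b - a)]
        calc b - a ≤ 1/N := hba
          _ = 1/(n+1) := by rw [hN]; push_cast; ring
          _ < δ := hn
      have hint2 : (∫ s in a..b, Lp s) ≤ 1/2 := by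
        have hI0b : IntervalIntegrable Lp MeasureTheory.volume 0 b := by
          apply hLpint.mono_set
          rw [Set.uIcc_of_le (ha0.trans hab), Set.uIcc_of_le zero_le_one]
          exact Set.Icc_subset_Icc le_rfl hb1
        have hI0a : IntervalIntegrable Lp MeasureTheory.volume 0 a := by
          apply hLpint.mono_set
          rw [Set.uIcc_of_le ha0, Set.uIcc_of_le zero_le_one]
          exact Set.Icc_subset_Icc le_rfl ha1
        have hsub : Φ b - Φ a = ∫ s in a..b, Lp s :=
          intervalIntegral.integral_interval_sub_left hI0b hI0a
        have hd2 : dist (Φ b) (Φ a) < 1/2 := hδ b hmemb a hmema hdistab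
        rw [Real.dist_eq] at hd2
        calc (∫ s in a..b, Lp s) = Φ b - Φ a := hsub.symm
          _ ≤ |Φ b - Φ a| := le_abs_self _
          _ ≤ 1/2 := hd2.le
      have hWa : (W a).PosSemidef := ih a ⟨ha0, le_rfl⟩
      have hres := key_interval hd W W' Lp hWcont hWherm hWderiv hLp0 hLpint hkey
        a b ha0 hb1 hab hint2 hWa
      rcases le_total t a with h | h
      · exact ih t ⟨ht.1, h⟩
      · exact hres t ⟨h, ht.2⟩
  intro t ht
  have hNN : min ((N:ℝ)/N) 1 = 1 := by
    rw [div_self (ne_of_gt hN0), min_self]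
  exact hstep N t (by rw [hNN]; exact ht)
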